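/- arXiv:1511.03100 — 2 statements merged into one kernel-verified Lean document; each statement's English description precedes it below -/
import Mathlib

section
/- If G is a cycle graph C_k with k ≥ 6 even, and e = uv is any edge of G, then the graph obtained from the pivot G^{uv} by deleting the vertices u and v is isomorphic to the cycle C_{k-2}. -/
open SimpleGraph

variable {α β : Type*}

/-- `G` contains an induced copy of `H`. -/
def HasInducedCopy (H : SimpleGraph β) (G : SimpleGraph α) : Prop :=
  ∃ f : β ↪ α, ∀ a b, G.Adj (f a) (f b) ↔ H.Adj a b

/-- The graph `2K₂`: two disjoint edges on four vertices. -/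
def twoK2Graph : SimpleGraph (Fin 4) :=
  SimpleGraph.fromEdgeSet {s(0, 1), s(2, 3)}

/-- The domino: a 6-cycle together with a chord joining two antipodal vertices. -/
def dominoGraph : SimpleGraph (Fin 6) :=
  SimpleGraph.fromEdgeSet {s(0, 1), s(1, 2), s(2, 3), s(3, 4), s(4, 5), s(5, 0), s(0, 3)}

/-- The arrow: a 4-cycle with two pendant vertices attached to two vertices of
the same color class. -/
def arrowGraph : SimpleGraph (Fin 6) :=
  SimpleGraph.fromEdgeSet {s(0, 1), s(1, 2), s(2, 3), s(3, 0), s(0, 4), s(2, 5)}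

/-- `T₂`: the subdivision of the claw `K_{1,3}` obtained by inserting one new vertex
into each edge. -/
def t2Graph : SimpleGraph (Fin 7) :=
  SimpleGraph.fromEdgeSet {s(0, 1), s(0, 2), s(0, 3), s(1, 4), s(2, 5), s(3, 6)}

/-- `G` has a hole: an induced chordless cycle of length at least 6. -/
def HasHole (G : SimpleGraph α) : Prop :=
  ∃ n, 6 ≤ n ∧ HasInducedCopy (SimpleGraph.cycleGraph n) G

/-- Bipartite distance-hereditary graph, via the forbidden induced subgraph
characterization: connected, bipartite, with no induced hole and no induced domino. -/
def IsBDH (G : SimpleGraph α) : Prop :=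
  G.Connected ∧ G.Colorable 2 ∧ ¬ HasHole G ∧ ¬ HasInducedCopy dominoGraph G

/-- The pivot `G^{uv}` of a graph on the pair `u v`: complement all edges between
`N(u) \ {v}` and `N(v) \ {u}`. -/
def gpivot (G : SimpleGraph α) (u v : α) : SimpleGraph α where
  Adj a b := a ≠ b ∧ Xor' (G.Adj a b)
    ((G.Adj u a ∧ a ≠ v ∧ G.Adj v b ∧ b ≠ u) ∨ (G.Adj u b ∧ b ≠ v ∧ G.Adj v a ∧ a ≠ u))
  symm := ⟨by
    intro a b h
    refine ⟨h.1.symm, ?_⟩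
    have hx := h.2
    rw [G.adj_comm b a, or_comm]
    exact hx⟩
  loopless := ⟨fun a h => h.1 rfl⟩

/-- `A`, `B` are the color classes of a bipartition of `G`. -/
def IsBipartitionWith (G : SimpleGraph α) (A B : Set α) : Prop :=
  (∀ v, v ∈ A ∨ v ∈ B) ∧ (∀ v, ¬ (v ∈ A ∧ v ∈ B)) ∧
    ∀ ⦃x y⦄, G.Adj x y → (x ∈ A ∧ y ∈ B) ∨ (x ∈ B ∧ y ∈ A)

/-- The neighborhoods of any two distinct vertices of `S` are comparable under inclusion. -/
def ChainOn (G : SimpleGraph α) (S : Set α) : Prop :=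
  ∀ u ∈ S, ∀ u' ∈ S, u ≠ u' →
    G.neighborSet u ⊆ G.neighborSet u' ∨ G.neighborSet u' ⊆ G.neighborSet u

/-- An edge `uv` is bisimplicial: `N(u) ∪ N(v)` induces a complete bipartite subgraph. -/
def Bisimplicial (G : SimpleGraph α) (u v : α) : Prop :=
  G.Adj u v ∧ ∀ a b, G.Adj v a → G.Adj u b → a ≠ b → G.Adj a b

/-- A pending edge: an edge one of whose endpoints has degree one. -/
def PendingEdge (G : SimpleGraph α) (u v : α) : Prop :=
  G.Adj u v ∧ ((∃! w, G.Adj u w) ∨ (∃! w, G.Adj v w))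

/-- A proper bisimplicial edge: bisimplicial and not pending. -/
def ProperBisimplicial (G : SimpleGraph α) (u v : α) : Prop :=
  Bisimplicial G u v ∧ ¬ PendingEdge G u v

/-- `G` is distance hereditary: every connected induced subgraph inherits distances. -/
def DistHereditary (G : SimpleGraph α) : Prop :=
  ∀ U : Set α, (G.induce U).Connected →
    ∀ u v : U, (G.induce U).dist u v = G.dist (u : α) (v : α)

/-- `G` can be built by the Bandelt–Mulder construction: there is an ordering of its
vertices such that every vertex apart from the first one is, at the time of its insertion,
either a pending vertex (exactly one earlier neighbor) or a twin of an earlier vertex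
(same earlier neighbors as that vertex). -/
def BMConstructible (G : SimpleGraph α) : Prop :=
  ∃ (n : ℕ) (e : Fin n ≃ α), ∀ i : Fin n, 0 < (i : ℕ) →
    (∃! w, (∃ j : Fin n, (j : ℕ) < (i : ℕ) ∧ e j = w) ∧ G.Adj (e i) w) ∨
    (∃ j : Fin n, (j : ℕ) < (i : ℕ) ∧
      ∀ x, (∃ k : Fin n, (k : ℕ) < (i : ℕ) ∧ e k = x) → (G.Adj (e i) x ↔ G.Adj (e j) x))

/-- One pivot step: `H` is obtained from `G` by pivoting on an edge of `G`. -/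
def PivotStep (G H : SimpleGraph α) : Prop := ∃ u v, G.Adj u v ∧ H = gpivot G u v

/-- `H` belongs to the pivot-orbit of `G`. -/
def InPivotOrbit (G H : SimpleGraph α) : Prop := Relation.ReflTransGen PivotStep G H

/-- A balanced bipartite graph: every induced cycle of length at least 6 has length
divisible by 4. -/
def BalancedGraph (G : SimpleGraph α) : Prop :=
  ∀ n, 6 ≤ n → HasInducedCopy (SimpleGraph.cycleGraph n) G → n % 4 = 0

/-- `H` is a minor of `G`, via branch sets. -/
def HasMinor (G : SimpleGraph α) (H : SimpleGraph β) : Prop :=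
  ∃ B : β → Set α, (∀ w, (B w).Nonempty) ∧ (∀ w, (G.induce (B w)).Connected) ∧
    (∀ w w', w ≠ w' → Disjoint (B w) (B w')) ∧
    ∀ w w', H.Adj w w' → ∃ a ∈ B w, ∃ b ∈ B w', G.Adj a b

/-- Outer-planar graph, via the forbidden minor characterization: no `K₄` minor and
no `K_{2,3}` minor. -/
def OuterplanarGraph (G : SimpleGraph α) : Prop :=
  ¬ HasMinor G (completeGraph (Fin 4)) ∧
  ¬ HasMinor G (completeBipartiteGraph (Fin 2) (Fin 3))

/-- `G` is 2-connected: connected and still connected after deleting any one vertex. -/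
def TwoConnected (G : SimpleGraph α) : Prop :=
  G.Connected ∧ ∀ v : α, ((⊤ : G.Subgraph).deleteVerts {v}).coe.Connected

/-- `G` is a path graph: a tree in which every vertex has at most two neighbors. -/
def IsPathGraph (G : SimpleGraph α) : Prop :=
  G.IsTree ∧ ∀ v a b c : α, G.Adj v a → G.Adj v b → G.Adj v c → a = b ∨ a = c ∨ b = c

/-- An abstract plane embedding of a graph `H`: a type of faces with a distinguished
outer face, where each edge borders a pair of distinct faces, and every face is
bordered by some edge. -/
structure PlaneEmbedding (H : SimpleGraph α) where
  F : Type
  outer : F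
  border : Sym2 α → Sym2 F
  border_ne : ∀ e ∈ H.edgeSet, ¬ (border e).IsDiag
  face_mem : ∀ f : F, ∃ e ∈ H.edgeSet, f ∈ border e

/-- The plane dual graph of an embedding: faces are adjacent when they share an edge. -/
def PlaneEmbedding.dualGraph {H : SimpleGraph α} (P : PlaneEmbedding H) : SimpleGraph P.F :=
  SimpleGraph.fromEdgeSet (P.border '' H.edgeSet)

/-- The weak dual: the subgraph of the dual induced by the bounded (non-outer) faces. -/
def PlaneEmbedding.weakDual {H : SimpleGraph α} (P : PlaneEmbedding H) :=
  P.dualGraph.induce {f | f ≠ P.outer}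

/-- Vertex `x` lies on face `f` of the embedding. -/
def PlaneEmbedding.OnFace {H : SimpleGraph α} (P : PlaneEmbedding H) (x : α) (f : P.F) : Prop :=
  ∃ w, H.Adj x w ∧ f ∈ P.border s(x, w)

/-- `S` is the arc set of a directed path inside the arc set `D`. -/
def IsDirectedPathSet {W : Type*} (D S : Set (W × W)) : Prop :=
  S ⊆ D ∧ ∃ (k : ℕ) (w : Fin (k + 1) → W), Function.Injective w ∧
    S = {p | ∃ i : Fin k, p = (w i.castSucc, w i.succ)}


private lemma modHelp {x n : ℕ} (h : x < 2 * n) (_hn : 0 < n) :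
    (x % n = x ∧ x < n) ∨ x % n + n = x := by
  rcases Nat.lt_or_ge x n with h1 | h1
  · exact Or.inl ⟨Nat.mod_eq_of_lt h1, h1⟩
  · right
    rw [Nat.mod_eq_sub_mod h1, Nat.mod_eq_of_lt (by omega)]
    omega

lemma gpivot_adj {G : SimpleGraph α} {u v a b : α} :
    (gpivot G u v).Adj a b ↔ a ≠ b ∧ Xor' (G.Adj a b)
      ((G.Adj u a ∧ a ≠ v ∧ G.Adj v b ∧ b ≠ u) ∨ (G.Adj u b ∧ b ≠ v ∧ G.Adj v a ∧ a ≠ u)) :=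
  Iff.rfl

lemma gpivot_comm (G : SimpleGraph α) (u v : α) : gpivot G u v = gpivot G v u := by
  ext a b
  simp only [gpivot_adj, Xor', Xor]
  constructor <;> (rintro ⟨h1, h2⟩; refine ⟨h1, ?_⟩) <;> tauto

private lemma key (m : ℕ) (u : Fin (m + 6)) :
    Nonempty (((gpivot (SimpleGraph.cycleGraph (m + 6)) u (u + 1)).induce
        {w | w ≠ u ∧ w ≠ u + 1}) ≃g SimpleGraph.cycleGraph (m + 4)) := by
  have hv1 : (1 : Fin (m+6)).val = 1 := by simp
  have hv0 : (0 : Fin (m+6)).val = 0 := rfl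
  have hv1' : (1 : Fin (m+4)).val = 1 := by simp
  have pf : ∀ i : Fin (m+4), i.val + 2 < m + 6 := fun i => by omega
  set F' : Fin (m+4) → Fin (m+6) := fun i => ⟨i.val + 2, pf i⟩ with hF'
  have hF'val : ∀ i, (F' i).val = i.val + 2 := fun i => rfl
  set F : Fin (m+4) → Fin (m+6) := fun i => u + F' i with hF
  -- atom lemmas
  have A1 : ∀ i j : Fin (m+4), (F' i = F' j) ↔ i.val = j.val := by
    intro i j
    rw [Fin.ext_iff]
    simp only [hF'val]
    omega
  have A2 : ∀ i j : Fin (m+4), (F' i - F' j = 1) ↔ i.val = j.val + 1 := by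
    intro i j
    have hi := i.isLt; have hj := j.isLt
    simp only [Fin.sub_def, Fin.ext_iff, Fin.val_mk, hF'val, hv1]
    rcases modHelp (x := (m+6 - (j.val+2)) + (i.val+2)) (n := m+6) (by omega) (by omega)
      with h | h <;> omega
  have A3 : ∀ i : Fin (m+4), ((0 : Fin (m+6)) - F' i = 1) ↔ i.val = m + 3 := by
    intro i
    have hi := i.isLt
    simp only [Fin.sub_def, Fin.ext_iff, Fin.val_mk, hF'val, hv0, hv1]
    rcases modHelp (x := (m+6 - (i.val+2)) + 0) (n := m+6) (by omega) (by omega)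
      with h | h <;> omega
  have A4 : ∀ i : Fin (m+4), (F' i = (1 : Fin (m+6))) ↔ False := by
    intro i
    simp only [iff_false]
    intro h
    rw [Fin.ext_iff, hv1, hF'val] at h
    omega
  have A5 : ∀ i : Fin (m+4), ((1 : Fin (m+6)) - F' i = 1) ↔ False := by
    intro i
    have hi := i.isLt
    simp only [iff_false]
    intro hc
    rw [Fin.sub_def, Fin.ext_iff] at hc
    simp only [Fin.val_mk, hF'val, hv1] at hc
    rcases modHelp (x := (m+6 - (i.val+2)) + 1) (n := m+6) (by omega) (by omega)
      with h | h <;> omega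
  have A6 : ∀ i : Fin (m+4), (F' i - (1 : Fin (m+6)) = 1) ↔ i.val = 0 := by
    intro i
    have hi := i.isLt
    simp only [Fin.sub_def, Fin.ext_iff, Fin.val_mk, hF'val, hv1]
    rcases modHelp (x := (m+6 - 1) + (i.val+2)) (n := m+6) (by omega) (by omega)
      with h | h <;> omega
  have A7 : ∀ i : Fin (m+4), (F' i = (0 : Fin (m+6))) ↔ False := by
    intro i
    simp only [iff_false]
    intro h
    rw [Fin.ext_iff, hv0, hF'val] at h
    omega
  have H1 : ∀ d e : Fin (m+6),
      (SimpleGraph.cycleGraph (m+6)).Adj (u + d) (u + e) ↔ (d - e = 1 ∨ e - d = 1) := by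
    intro d e
    rw [SimpleGraph.cycleGraph_adj, show u + d - (u + e) = d - e by abel,
      show u + e - (u + d) = e - d by abel]
  have H2 : ∀ d : Fin (m+6),
      (SimpleGraph.cycleGraph (m+6)).Adj u (u + d) ↔ ((0 : Fin (m+6)) - d = 1 ∨ d = 1) := by
    intro d
    rw [SimpleGraph.cycleGraph_adj, show u - (u + d) = 0 - d by abel,
      show u + d - u = d by abel]
  have H3 : ∀ d e : Fin (m+6), (u + d = u + e) ↔ d = e := fun d e => add_right_inj u
  have H4 : ∀ d : Fin (m+6), (u + d = u) ↔ d = 0 := fun d => add_eq_left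
  have B1 : ∀ i j : Fin (m+4), (SimpleGraph.cycleGraph (m+4)).Adj i j ↔
      (i.val = j.val + 1 ∨ j.val = i.val + 1 ∨ (i.val = 0 ∧ j.val = m+3) ∨
        (j.val = 0 ∧ i.val = m+3)) := by
    intro i j
    have hi := i.isLt; have hj := j.isLt
    rw [SimpleGraph.cycleGraph_adj]
    simp only [Fin.sub_def, Fin.ext_iff, Fin.val_mk, hv1']
    rcases modHelp (x := (m+4 - j.val) + i.val) (n := m+4) (by omega) (by omega) with h | h <;>
      rcases modHelp (x := (m+4 - i.val) + j.val) (n := m+4) (by omega) (by omega)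
        with h2 | h2 <;> omega
  have mem : ∀ i : Fin (m+4), F i ≠ u ∧ F i ≠ u + 1 := by
    intro i
    constructor
    · intro h
      exact (A7 i).mp ((H4 (F' i)).mp h)
    · intro h
      exact (A4 i).mp ((H3 (F' i) 1).mp h)
  have h2 : ∀ w : Fin (m+6), w ≠ u → w ≠ u + 1 → 2 ≤ (w - u).val := by
    intro w hw1 hw2
    have h0 : w - u ≠ 0 := fun h => hw1 (by rwa [sub_eq_zero] at h)
    have h1 : w - u ≠ 1 := by
      intro h
      rw [sub_eq_iff_eq_add] at h
      exact hw2 (by rw [h]; exact add_comm 1 u)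
    have h0' : (w - u).val ≠ 0 := fun h => h0 (Fin.ext (by rw [h, hv0]))
    have h1' : (w - u).val ≠ 1 := fun h => h1 (Fin.ext (by rw [h, hv1]))
    omega
  let f : Fin (m+4) → {w : Fin (m+6) // w ∈ {w | w ≠ u ∧ w ≠ u + 1}} :=
    fun i => ⟨F i, mem i⟩
  have hfbij : Function.Bijective f := by
    constructor
    · intro i j hij
      have : F i = F j := congrArg Subtype.val hij
      have : F' i = F' j := (H3 _ _).mp this
      exact Fin.ext ((A1 i j).mp this)
    · rintro ⟨w, hw1, hw2⟩
      have hge := h2 w hw1 hw2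
      have hlt := (w - u).isLt
      refine ⟨⟨(w - u).val - 2, by omega⟩, ?_⟩
      apply Subtype.ext
      show u + F' _ = w
      have : F' ⟨(w - u).val - 2, by omega⟩ = w - u := by
        apply Fin.ext
        simp only [hF'val, Fin.val_mk]
        omega
      rw [this]
      abel
  refine ⟨(SimpleGraph.Iso.symm ⟨Equiv.ofBijective f hfbij, ?_⟩ : _)⟩
  intro i j
  show (gpivot (SimpleGraph.cycleGraph (m+6)) u (u+1)).Adj (F i) (F j) ↔
    (SimpleGraph.cycleGraph (m+4)).Adj i j
  rw [gpivot_adj]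
  simp only [hF, ne_eq, H2, H1, H3, H4, A1, A2, A3, A4, A5, A6, A7, B1, Xor', Xor, or_false, false_or,
    and_false, false_and, not_false_eq_true, and_true, true_and]
  have hi := i.isLt; have hj := j.isLt
  omega

theorem stmt5 (k : ℕ) (hk : 6 ≤ k) (hke : Even k) (u v : Fin k)
    (huv : (SimpleGraph.cycleGraph k).Adj u v) :
    Nonempty (((gpivot (SimpleGraph.cycleGraph k) u v).induce {w | w ≠ u ∧ w ≠ v}) ≃g
      SimpleGraph.cycleGraph (k - 2)) := by
  obtain ⟨m, rfl⟩ : ∃ m, k = m + 6 := ⟨k - 6, by omega⟩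
  rw [SimpleGraph.cycleGraph_adj] at huv
  rcases huv with h | h
  · obtain rfl : u = v + 1 := by rw [sub_eq_iff_eq_add] at h; rw [h]; exact add_comm 1 v
    rw [gpivot_comm]
    have hset : {w : Fin (m+6) | w ≠ v + 1 ∧ w ≠ v} = {w | w ≠ v ∧ w ≠ v + 1} := by
      ext w; exact and_comm
    rw [hset]
    exact key m v
  · obtain rfl : v = u + 1 := by rw [sub_eq_iff_eq_add] at h; rw [h]; exact add_comm 1 u
    exact key m u
end

section
/- Let G be a connected bipartite distance-hereditary graph and let e = xy be a bisimplicial edge of G. Then e is a cut-edge of the pivot graph G^{e}, i.e., removing e from G^{e} disconnects G^{e}. -/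
open SimpleGraph

variable {α β : Type*}

section Aux

variable {G : SimpleGraph α} {x y : α}

private lemma walk_take' (p : G.Walk x y) :
    ∀ i, i ≤ p.length → ∃ q : G.Walk x (p.getVert i), q.length = i := by
  induction p with
  | nil =>
    intro i hi
    simp only [SimpleGraph.Walk.length_nil, Nat.le_zero] at hi
    subst hi
    exact ⟨SimpleGraph.Walk.nil.copy rfl (SimpleGraph.Walk.getVert_zero _).symm, by simp⟩
  | cons h q ih =>
    intro i hi
    match i with
    | 0 => exact ⟨SimpleGraph.Walk.nil.copy rfl (SimpleGraph.Walk.getVert_zero _).symm, by simp⟩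
    | n + 1 =>
      obtain ⟨q', hq'⟩ := ih n (by simpa [Nat.succ_le_succ_iff] using hi)
      exact ⟨(q'.cons h).copy rfl (SimpleGraph.Walk.getVert_cons_succ _ _).symm, by simp [hq']⟩

private lemma walk_drop' (p : G.Walk x y) :
    ∀ i, i ≤ p.length → ∃ q : G.Walk (p.getVert i) y, q.length = p.length - i := by
  induction p with
  | nil =>
    intro i hi
    simp only [SimpleGraph.Walk.length_nil, Nat.le_zero] at hi
    subst hi
    exact ⟨SimpleGraph.Walk.nil.copy (SimpleGraph.Walk.getVert_zero _).symm rfl, by simp⟩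
  | cons h q ih =>
    intro i hi
    match i with
    | 0 => exact ⟨(q.cons h).copy (SimpleGraph.Walk.getVert_zero _).symm rfl, by simp⟩
    | n + 1 =>
      obtain ⟨q', hq'⟩ := ih n (by simpa [Nat.succ_le_succ_iff] using hi)
      exact ⟨q'.copy (SimpleGraph.Walk.getVert_cons_succ _ _).symm rfl, by simp [hq']⟩

private lemma fin_sub_val_one {m : ℕ} (hm : 2 ≤ m) (i j : Fin m) :
    (i - j).val = 1 ↔ (i.val = j.val + 1 ∨ (j.val = m - 1 ∧ i.val = 0)) := by
  rw [Fin.sub_def]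
  show ((m - j.val) + i.val) % m = 1 ↔ _
  have hi := i.isLt
  have hj := j.isLt
  rcases le_or_gt j.val i.val with h | h
  · have he : (m - j.val) + i.val = m + (i.val - j.val) := by omega
    rw [he, Nat.add_mod_left, Nat.mod_eq_of_lt (by omega)]
    omega
  · rw [Nat.mod_eq_of_lt (by omega)]
    omega

end Aux

set_option maxHeartbeats 4000000 in
theorem stmt10 {α : Type*} (G : SimpleGraph α) (hG : IsBDH G) (x y : α)
    (hbis : Bisimplicial G x y) :
    ¬ ((gpivot G x y).deleteEdges {s(x, y)}).Connected := by
  classical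
  obtain ⟨hxy, hb⟩ := hbis
  obtain ⟨-, hcol, hhole, hdom⟩ := hG
  obtain ⟨C⟩ := hcol
  set H : SimpleGraph α := (gpivot G x y).deleteEdges {s(x, y)} with hHdef
  have key : ∀ c d : α, G.Adj x c → G.Adj y d → c ≠ d → G.Adj c d := by
    intro c d h1 h2 hne
    exact (hb d c h2 h1 (Ne.symm hne)).symm
  have hH : ∀ a b : α, H.Adj a b ↔ G.Adj a b ∧
      ¬((G.Adj x a ∧ a ≠ y) ∧ (G.Adj y b ∧ b ≠ x)) ∧
      ¬((G.Adj x b ∧ b ≠ y) ∧ (G.Adj y a ∧ a ≠ x)) ∧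
      ¬(a = x ∧ b = y) ∧ ¬(a = y ∧ b = x) := by
    intro a b
    rw [hHdef, SimpleGraph.deleteEdges_adj]
    have hgp : (gpivot G x y).Adj a b ↔ a ≠ b ∧ Xor' (G.Adj a b)
        ((G.Adj x a ∧ a ≠ y ∧ G.Adj y b ∧ b ≠ x) ∨
          (G.Adj x b ∧ b ≠ y ∧ G.Adj y a ∧ a ≠ x)) := Iff.rfl
    rw [hgp]
    simp only [Set.mem_singleton_iff, Sym2.eq_iff, Xor']
    constructor
    · rintro ⟨⟨hne, hx⟩, hs⟩
      rcases hx with ⟨hadj, hc⟩ | ⟨hc, hnadj⟩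
      · refine ⟨hadj, ?_, ?_, ?_, ?_⟩ <;> intro hcc
        · exact hc (Or.inl ⟨hcc.1.1, hcc.1.2, hcc.2.1, hcc.2.2⟩)
        · exact hc (Or.inr ⟨hcc.1.1, hcc.1.2, hcc.2.1, hcc.2.2⟩)
        · exact hs (Or.inl hcc)
        · exact hs (Or.inr hcc)
      · exfalso
        rcases hc with ⟨h1, _, h3, _⟩ | ⟨h1, _, h3, _⟩
        · exact hnadj (key a b h1 h3 hne)
        · exact hnadj ((key b a h1 h3 (Ne.symm hne)).symm)
    · rintro ⟨hadj, h1, h2, h3, h4⟩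
      refine ⟨⟨hadj.ne, Or.inl ⟨hadj, ?_⟩⟩, ?_⟩
      · rintro (⟨a1, a2, a3, a4⟩ | ⟨a1, a2, a3, a4⟩)
        · exact h1 ⟨⟨a1, a2⟩, a3, a4⟩
        · exact h2 ⟨⟨a1, a2⟩, a3, a4⟩
      · rintro (hcc | hcc)
        · exact h3 hcc
        · exact h4 hcc
  have hnc : ∀ w, G.Adj x w → G.Adj y w → False := by
    intro w h1 h2
    exact (by decide : ∀ a b c : Fin 2, a ≠ b → a ≠ c → b ≠ c → False)
      (C x) (C y) (C w) (C.valid hxy) (C.valid h1) (C.valid h2)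
  intro hcon
  obtain ⟨p0⟩ := hcon.preconnected x y
  have hex : ∃ n, ∃ q : H.Walk x y, q.length = n := ⟨p0.length, p0, rfl⟩
  obtain ⟨p, hp⟩ := Nat.find_spec hex
  have hmin : ∀ q : H.Walk x y, p.length ≤ q.length := by
    intro q
    exact le_trans (le_of_eq hp) (Nat.find_min' hex ⟨q, rfl⟩)
  set L := p.length with hLdef
  set v : ℕ → α := p.getVert with hvdef
  have hv0 : v 0 = x := p.getVert_zero
  have hvL : v L = y := p.getVert_length
  have hadjH : ∀ i, i < L → H.Adj (v i) (v (i + 1)) := fun i hi => p.adj_getVert_succ hi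
  have hadjG : ∀ i, i < L → G.Adj (v i) (v (i + 1)) := fun i hi => ((hH _ _).mp (hadjH i hi)).1
  have hshort : ∀ i j, i < j → j ≤ L → H.Adj (v i) (v j) → j = i + 1 := by
    intro i j hij hjL ha
    by_contra hne
    obtain ⟨q1, hq1⟩ := walk_take' p i (by omega)
    obtain ⟨q2, hq2⟩ := walk_drop' p j hjL
    have := hmin (q1.append (SimpleGraph.Walk.cons ha q2))
    rw [SimpleGraph.Walk.length_append, SimpleGraph.Walk.length_cons, hq1, hq2] at this
    omega
  have hinj : ∀ i j, i ≤ L → j ≤ L → v i = v j → i = j := by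
    have key2 : ∀ i j, i < j → j ≤ L → v i ≠ v j := by
      intro i j hij hjL heq
      obtain ⟨q1, hq1⟩ := walk_take' p i (by omega)
      obtain ⟨q2, hq2⟩ := walk_drop' p j hjL
      have := hmin (q1.append (q2.copy heq.symm rfl))
      rw [SimpleGraph.Walk.length_append, SimpleGraph.Walk.length_copy, hq1, hq2] at this
      omega
    intro i j hi hj heq
    rcases Nat.lt_trichotomy i j with h | h | h
    · exact absurd heq (key2 i j h hj)
    · exact h
    · exact absurd heq.symm (key2 j i h hi)
  have hpar : ∀ i, i ≤ L → (C (v i) = C x ↔ Even i) := by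
    intro i
    induction i with
    | zero => intro _; simp [hv0]
    | succ k ih =>
      intro hk
      have hik := ih (by omega)
      have hne := C.valid (hadjG k (by omega))
      have flip : ∀ a b c : Fin 2, a ≠ b → (b = c ↔ ¬(a = c)) := by decide
      rw [flip _ _ _ hne, hik, Nat.even_add_one]
  have hLodd : ¬ Even L := by
    intro hE
    have h1 := (hpar L le_rfl).mpr hE
    rw [hvL] at h1
    exact C.valid hxy h1.symm
  have hL0 : L ≠ 0 := by intro h0; exact hLodd (by simp [h0])
  have hL1 : L ≠ 1 := by
    intro h1
    have h01 := hadjH 0 (by omega)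
    rw [hv0] at h01
    rw [h1] at hvL
    rw [hvL] at h01
    exact ((hH _ _).mp h01).2.2.2.1 ⟨rfl, rfl⟩
  have hB1 : G.Adj x (v 1) ∧ v 1 ≠ y := by
    have h01 := hadjH 0 (by omega)
    rw [hv0] at h01
    obtain ⟨hg, -, -, h4, -⟩ := (hH _ _).mp h01
    exact ⟨hg, fun h => h4 ⟨rfl, h⟩⟩
  have hA1 : G.Adj y (v (L - 1)) ∧ v (L - 1) ≠ x := by
    have h01 := hadjH (L - 1) (by omega)
    rw [show L - 1 + 1 = L by omega, hvL] at h01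
    obtain ⟨hg, -, -, h4, -⟩ := (hH _ _).mp h01
    exact ⟨hg.symm, fun h => h4 ⟨h, rfl⟩⟩
  have hnotB : ∀ i, 2 ≤ i → i ≤ L - 2 → ¬(G.Adj x (v i) ∧ v i ≠ y) := by
    rintro i h2 hiL ⟨hxi, hiy⟩
    have hHa : H.Adj x (v i) := by
      apply (hH _ _).mpr
      refine ⟨hxi, ?_, ?_, ?_, ?_⟩
      · rintro ⟨⟨hxx, -⟩, -⟩; exact G.loopless.irrefl x hxx
      · rintro ⟨-, -, hxne⟩; exact hxne rfl
      · rintro ⟨-, h⟩; exact hiy h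
      · rintro ⟨h, -⟩; exact hxy.ne h
    rw [← hv0] at hHa
    have := hshort 0 i (by omega) (by omega) hHa
    omega
  have hnotA : ∀ i, 2 ≤ i → i ≤ L - 2 → ¬(G.Adj y (v i) ∧ v i ≠ x) := by
    rintro i h2 hiL ⟨hyi, hix⟩
    have hHa : H.Adj (v i) y := by
      apply (hH _ _).mpr
      refine ⟨hyi.symm, ?_, ?_, ?_, ?_⟩
      · rintro ⟨-, hyy, -⟩; exact G.loopless.irrefl y hyy
      · rintro ⟨⟨-, hyne⟩, -⟩; exact hyne rfl
      · rintro ⟨h, -⟩; exact hix h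
      · rintro ⟨-, h⟩; exact hxy.ne h.symm
    rw [← hvL] at hHa
    have := hshort i L (by omega) le_rfl hHa
    omega
  have hchord : ∀ i j, 1 ≤ i → i + 2 ≤ j → j ≤ L - 1 → ¬(i = 1 ∧ j = L - 1) →
      ¬G.Adj (v i) (v j) := by
    intro i j h1 h2 h3 hx4 hGij
    have hL4 : 4 ≤ L := by omega
    have hvix : v i ≠ x := fun h => by
      have := hinj i 0 (by omega) (by omega) (by rw [h, hv0]); omega
    have hviy : v i ≠ y := fun h => by
      have := hinj i L (by omega) le_rfl (by rw [h, hvL]); omega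
    have hvjx : v j ≠ x := fun h => by
      have := hinj j 0 (by omega) (by omega) (by rw [h, hv0]); omega
    have hHa : H.Adj (v i) (v j) := by
      apply (hH _ _).mpr
      refine ⟨hGij, ?_, ?_, fun h => hvix h.1, fun h => hviy h.1⟩
      · rintro ⟨⟨hBi, -⟩, hAj, -⟩
        rcases Nat.eq_or_lt_of_le h1 with hi1 | hi1
        · rcases Nat.eq_or_lt_of_le h3 with hj1 | hj1
          · exact hx4 ⟨hi1.symm, hj1⟩
          · exact hnotA j (by omega) (by omega) ⟨hAj, hvjx⟩
        · exact hnotB i (by omega) (by omega) ⟨hBi, hviy⟩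
      · rintro ⟨⟨hBj, -⟩, hAi, -⟩
        rcases Nat.eq_or_lt_of_le h1 with hi1 | hi1
        · exact hnc (v i) (by rw [← hi1]; exact hB1.1) hAi
        · exact hnotA i (by omega) (by omega) ⟨hAi, hvix⟩
    have := hshort i j (by omega) (by omega) hHa
    omega
  have hLmod : L % 2 = 1 := by
    rcases Nat.even_or_odd L with h | h
    · exact absurd h hLodd
    · exact Nat.odd_iff.mp h
  have hcase : L = 3 ∨ L = 5 ∨ 7 ≤ L := by omega
  rcases hcase with hL | hL | hL
  · -- L = 3
    have h12 := hadjH 1 (by omega)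
    obtain ⟨-, hcmp, -⟩ := (hH _ _).mp h12
    rw [show (1 + 1 : ℕ) = L - 1 from by omega] at hcmp
    exact hcmp ⟨hB1, hA1⟩
  · -- L = 5 : domino
    apply hdom
    have g01 : G.Adj (v 0) (v 1) := hadjG 0 (by omega)
    have g12 : G.Adj (v 1) (v 2) := hadjG 1 (by omega)
    have g23 : G.Adj (v 2) (v 3) := hadjG 2 (by omega)
    have g34 : G.Adj (v 3) (v 4) := hadjG 3 (by omega)
    have g45 : G.Adj (v 4) (v 5) := hadjG 4 (by omega)
    have g50 : G.Adj (v 5) (v 0) := by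
      rw [hv0, show (5 : ℕ) = L from by omega, hvL]; exact hxy.symm
    have g14 : G.Adj (v 1) (v 4) := by
      rw [show (4 : ℕ) = L - 1 from by omega]
      exact key _ _ hB1.1 hA1.1
        (fun h => by have := hinj 1 (L - 1) (by omega) (by omega) h; omega)
    have hv2y : v 2 ≠ y := fun h => by
      have := hinj 2 L (by omega) le_rfl (by rw [h, hvL]); omega
    have hv3y : v 3 ≠ y := fun h => by
      have := hinj 3 L (by omega) le_rfl (by rw [h, hvL]); omega
    have hv2x : v 2 ≠ x := fun h => by
      have := hinj 2 0 (by omega) (by omega) (by rw [h, hv0]); omega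
    have hv3x : v 3 ≠ x := fun h => by
      have := hinj 3 0 (by omega) (by omega) (by rw [h, hv0]); omega
    have n02 : ¬G.Adj (v 0) (v 2) := by
      rw [hv0]; exact fun h => hnotB 2 (by omega) (by omega) ⟨h, hv2y⟩
    have n03 : ¬G.Adj (v 0) (v 3) := by
      rw [hv0]; exact fun h => hnotB 3 (by omega) (by omega) ⟨h, hv3y⟩
    have n04 : ¬G.Adj (v 0) (v 4) := by
      rw [hv0, show (4 : ℕ) = L - 1 from by omega]
      exact fun h => hnc _ h hA1.1
    have n13 : ¬G.Adj (v 1) (v 3) := hchord 1 3 (by omega) (by omega) (by omega) (by omega)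
    have n24 : ¬G.Adj (v 2) (v 4) := hchord 2 4 (by omega) (by omega) (by omega) (by omega)
    have n15 : ¬G.Adj (v 1) (v 5) := by
      rw [show (5 : ℕ) = L from by omega, hvL]
      exact fun h => hnc _ hB1.1 h.symm
    have n25 : ¬G.Adj (v 2) (v 5) := by
      rw [show (5 : ℕ) = L from by omega, hvL]
      exact fun h => hnotA 2 (by omega) (by omega) ⟨h.symm, hv2x⟩
    have n35 : ¬G.Adj (v 3) (v 5) := by
      rw [show (5 : ℕ) = L from by omega, hvL]
      exact fun h => hnotA 3 (by omega) (by omega) ⟨h.symm, hv3x⟩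
    have hfinj : Function.Injective (fun i : Fin 6 => v ((i.val + 1) % 6)) := by
      intro i j h
      have h6i : (i.val + 1) % 6 < 6 := Nat.mod_lt _ (by norm_num)
      have h6j : (j.val + 1) % 6 < 6 := Nat.mod_lt _ (by norm_num)
      have := hinj _ _ (by omega) (by omega) h
      have hi := i.isLt
      have hj := j.isLt
      exact Fin.ext (by omega)
    refine ⟨⟨fun i : Fin 6 => v ((i.val + 1) % 6), hfinj⟩, ?_⟩
    intro a b
    simp only [Function.Embedding.coeFn_mk]
    fin_cases a <;> fin_cases b
    · exact iff_of_false (G.loopless.irrefl _) (by simp [dominoGraph, Sym2.eq_iff])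
    · exact iff_of_true g12 (by simp [dominoGraph, Sym2.eq_iff])
    · exact iff_of_false n13 (by simp [dominoGraph, Sym2.eq_iff])
    · exact iff_of_true g14 (by simp [dominoGraph, Sym2.eq_iff])
    · exact iff_of_false n15 (by simp [dominoGraph, Sym2.eq_iff])
    · exact iff_of_true g01.symm (by simp [dominoGraph, Sym2.eq_iff])
    · exact iff_of_true g12.symm (by simp [dominoGraph, Sym2.eq_iff])
    · exact iff_of_false (G.loopless.irrefl _) (by simp [dominoGraph, Sym2.eq_iff])
    · exact iff_of_true g23 (by simp [dominoGraph, Sym2.eq_iff])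
    · exact iff_of_false n24 (by simp [dominoGraph, Sym2.eq_iff])
    · exact iff_of_false n25 (by simp [dominoGraph, Sym2.eq_iff])
    · exact iff_of_false (fun h => n02 h.symm) (by simp [dominoGraph, Sym2.eq_iff])
    · exact iff_of_false (fun h => n13 h.symm) (by simp [dominoGraph, Sym2.eq_iff])
    · exact iff_of_true g23.symm (by simp [dominoGraph, Sym2.eq_iff])
    · exact iff_of_false (G.loopless.irrefl _) (by simp [dominoGraph, Sym2.eq_iff])
    · exact iff_of_true g34 (by simp [dominoGraph, Sym2.eq_iff])
    · exact iff_of_false n35 (by simp [dominoGraph, Sym2.eq_iff])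
    · exact iff_of_false (fun h => n03 h.symm) (by simp [dominoGraph, Sym2.eq_iff])
    · exact iff_of_true g14.symm (by simp [dominoGraph, Sym2.eq_iff])
    · exact iff_of_false (fun h => n24 h.symm) (by simp [dominoGraph, Sym2.eq_iff])
    · exact iff_of_true g34.symm (by simp [dominoGraph, Sym2.eq_iff])
    · exact iff_of_false (G.loopless.irrefl _) (by simp [dominoGraph, Sym2.eq_iff])
    · exact iff_of_true g45 (by simp [dominoGraph, Sym2.eq_iff])
    · exact iff_of_false (fun h => n04 h.symm) (by simp [dominoGraph, Sym2.eq_iff])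
    · exact iff_of_false (fun h => n15 h.symm) (by simp [dominoGraph, Sym2.eq_iff])
    · exact iff_of_false (fun h => n25 h.symm) (by simp [dominoGraph, Sym2.eq_iff])
    · exact iff_of_false (fun h => n35 h.symm) (by simp [dominoGraph, Sym2.eq_iff])
    · exact iff_of_true g45.symm (by simp [dominoGraph, Sym2.eq_iff])
    · exact iff_of_false (G.loopless.irrefl _) (by simp [dominoGraph, Sym2.eq_iff])
    · exact iff_of_true g50 (by simp [dominoGraph, Sym2.eq_iff])
    · exact iff_of_true g01 (by simp [dominoGraph, Sym2.eq_iff])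
    · exact iff_of_false n02 (by simp [dominoGraph, Sym2.eq_iff])
    · exact iff_of_false n03 (by simp [dominoGraph, Sym2.eq_iff])
    · exact iff_of_false n04 (by simp [dominoGraph, Sym2.eq_iff])
    · exact iff_of_true g50.symm (by simp [dominoGraph, Sym2.eq_iff])
    · exact iff_of_false (G.loopless.irrefl _) (by simp [dominoGraph, Sym2.eq_iff])
  · -- 7 ≤ L : hole
    apply hhole
    refine ⟨L - 1, by omega, ?_⟩
    have hm2 : 2 ≤ L - 1 := by omega
    have g1L : G.Adj (v 1) (v (L - 1)) :=
      key _ _ hB1.1 hA1.1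
        (fun h => by have := hinj 1 (L - 1) (by omega) (by omega) h; omega)
    have hfinj : Function.Injective (fun i : Fin (L - 1) => v (i.val + 1)) := by
      intro i j h
      have hi := i.isLt
      have hj := j.isLt
      have := hinj (i.val + 1) (j.val + 1) (by omega) (by omega) h
      exact Fin.ext (by omega)
    refine ⟨⟨fun i : Fin (L - 1) => v (i.val + 1), hfinj⟩, ?_⟩
    intro a b
    simp only [Function.Embedding.coeFn_mk]
    rw [SimpleGraph.cycleGraph_adj', fin_sub_val_one hm2, fin_sub_val_one hm2]
    have ha := a.isLt
    have hb := b.isLt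
    constructor
    · intro hg
      have hne : a.val ≠ b.val := by
        intro h
        rw [h] at hg
        exact G.loopless.irrefl _ hg
      rcases Nat.lt_or_ge a.val b.val with hab | hab
      · rcases Nat.eq_or_lt_of_le (Nat.succ_le_of_lt hab) with he | hlt
        · exact Or.inr (Or.inl he.symm)
        · by_cases hw : a.val = 0 ∧ b.val = L - 2
          · exact Or.inl (Or.inr ⟨by omega, hw.1⟩)
          · exact absurd hg
              (hchord (a.val + 1) (b.val + 1) (by omega) (by omega) (by omega) (by omega))
      · have hba : b.val < a.val := by omega
        rcases Nat.eq_or_lt_of_le (Nat.succ_le_of_lt hba) with he | hlt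
        · exact Or.inl (Or.inl he.symm)
        · by_cases hw : b.val = 0 ∧ a.val = L - 2
          · exact Or.inr (Or.inr ⟨by omega, hw.1⟩)
          · exact absurd hg.symm
              (hchord (b.val + 1) (a.val + 1) (by omega) (by omega) (by omega) (by omega))
    · rintro ((he | ⟨hb1, ha0⟩) | (he | ⟨ha1, hb0⟩))
      · rw [he]
        exact (hadjG (b.val + 1) (by omega)).symm
      · rw [ha0, hb1, show (L - 1 - 1 + 1 : ℕ) = L - 1 from by omega]
        exact g1L
      · rw [he]
        exact hadjG (a.val + 1) (by omega)
      · rw [hb0, ha1, show (L - 1 - 1 + 1 : ℕ) = L - 1 from by omega]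
        exact g1L.symm
end
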